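/- Fix a prime p. Let n and m be positive integers with m > n, and let v_1, …, v_m ∈ ℤ^n be nonzero vectors such that the cone C := ⟨v_1,…,v_m⟩_{ℝ≥0} ⊆ ℝ^n is strongly convex and satisfies C ∩ ℤ^n = ⟨v_1,…,v_m⟩_ℕ. Then there exist an exponent e ≥ 1, a nonzero lattice point x ∈ ℤ^n, and natural numbers a_1, …, a_m with a_i < p^e for all i, such that p^e·x = a_1 v_1 + ⋯ + a_m v_m. -/

import Mathlib

open Finset

/-- If `m > n ≥ 1`, the `v_i` are nonzero, the cone they span is strongly
convex and saturated (`C ∩ ℤ^n = ⟨v⟩_ℕ`), then there are `e ≥ 1`, a nonzero lattice point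
`x` and naturals `a_i < p^e` with `p^e · x = ∑ a_i v_i`. -/
theorem exists_p_power_lattice_point (p n m : ℕ) (hp : p.Prime) (hn : 1 ≤ n) (hm : n < m)
    (v : Fin m → Fin n → ℤ) (hv : ∀ i, v i ≠ 0)
    (hconv : ∀ y : Fin n → ℝ,
      (∃ c : Fin m → ℝ, (∀ i, 0 ≤ c i) ∧ y = ∑ i, c i • (fun j => (v i j : ℝ))) →
      (∃ c : Fin m → ℝ, (∀ i, 0 ≤ c i) ∧ -y = ∑ i, c i • (fun j => (v i j : ℝ))) →
      y = 0)
    (hlat : ∀ x : Fin n → ℤ,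
      ((∃ c : Fin m → ℝ, (∀ i, 0 ≤ c i) ∧
          (fun j => (x j : ℝ)) = ∑ i, c i • (fun j => (v i j : ℝ))) ↔
        ∃ a : Fin m → ℕ, x = ∑ i, (a i : ℤ) • v i)) :
    ∃ e : ℕ, 1 ≤ e ∧ ∃ x : Fin n → ℤ, x ≠ 0 ∧ ∃ a : Fin m → ℕ,
      (∀ i, a i < p ^ e) ∧ ((p : ℤ) ^ e) • x = ∑ i, (a i : ℤ) • v i := by
  haveI : Fact p.Prime := ⟨hp⟩
  have hcard : Fintype.card (Fin n → ZMod p) < Fintype.card (Fin m → ZMod p) := by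
    simp only [Fintype.card_fun, ZMod.card, Fintype.card_fin]
    exact Nat.pow_lt_pow_right hp.one_lt hm
  obtain ⟨a, b, hab, hfab⟩ := Fintype.exists_ne_map_eq_of_card_lt
      (fun (c : Fin m → ZMod p) (j : Fin n) => ∑ i, c i * (v i j : ZMod p)) hcard
  set d : Fin m → ℕ := fun i => (a i - b i).val with hd
  have hdp : ∀ i, d i < p := fun i => ZMod.val_lt _
  have hdcast : ∀ i, ((d i : ℤ) : ZMod p) = a i - b i := by
    intro i
    push_cast
    exact ZMod.natCast_rightInverse _
  -- divisibility
  have hdvd : ∀ j, (p : ℤ) ∣ ∑ i, (d i : ℤ) * v i j := by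
    intro j
    have h0 : ((∑ i, (d i : ℤ) * v i j : ℤ) : ZMod p) = 0 := by
      push_cast
      have e1 : ∀ i ∈ univ, ((d i : ℕ) : ZMod p) * ((v i j : ℤ) : ZMod p)
          = a i * ((v i j : ℤ) : ZMod p) - b i * ((v i j : ℤ) : ZMod p) := by
        intro i _
        have h2 := hdcast i
        push_cast at h2
        rw [h2]
        ring
      rw [Finset.sum_congr rfl e1, Finset.sum_sub_distrib]
      have := congrFun hfab j
      rw [this, sub_self]
    exact (ZMod.intCast_zmod_eq_zero_iff_dvd _ p).mp h0
  set x : Fin n → ℤ := fun j => (∑ i, (d i : ℤ) * v i j) / p with hx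
  have hpx : ∀ j, (p : ℤ) * x j = ∑ i, (d i : ℤ) * v i j := by
    intro j
    exact Int.mul_ediv_cancel' (hdvd j)
  obtain ⟨i0, hi0⟩ : ∃ i, d i ≠ 0 := by
    by_contra h
    push_neg at h
    apply hab
    funext i
    have h2 := hdcast i
    rw [h i] at h2
    simp only [Nat.cast_zero, Int.cast_zero] at h2
    exact sub_eq_zero.mp h2.symm
  have hxne : x ≠ 0 := by
    intro hx0
    have hsum0 : ∀ j, ∑ i, (d i : ℤ) * v i j = 0 := by
      intro j
      rw [← hpx j, hx0]
      simp
    have hrsum0 : ∀ j, ∑ i, (d i : ℝ) * (v i j : ℝ) = 0 := by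
      intro j
      have := hsum0 j
      have : ((∑ i, (d i : ℤ) * v i j : ℤ) : ℝ) = 0 := by rw [this]; simp
      push_cast at this
      exact this
    have hy := hconv (fun j => (v i0 j : ℝ))
      ⟨fun i => if i = i0 then 1 else 0, by
        intro i; dsimp only; split <;> norm_num, by
        funext j
        simp only [Finset.sum_apply, Pi.smul_apply, smul_eq_mul]
        rw [Finset.sum_eq_single i0]
        · simp
        · intro i _ hne; simp [hne]
        · simp⟩
      ⟨fun i => if i = i0 then 0 else (d i : ℝ) / (d i0 : ℝ), by
        intro i
        dsimp only
        split
        · norm_num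
        · positivity, by
        funext j
        simp only [Pi.neg_apply, Finset.sum_apply, Pi.smul_apply, smul_eq_mul]
        have hd0 : (d i0 : ℝ) ≠ 0 := Nat.cast_ne_zero.mpr hi0
        have hsplit := hrsum0 j
        rw [← Finset.sum_erase_add _ _ (Finset.mem_univ i0)] at hsplit
        rw [Finset.sum_eq_sum_sdiff_singleton_add (Finset.mem_univ i0)]
        simp only [if_pos rfl, eq_self_iff_true, ↓reduceIte, zero_mul, add_zero]
        have : ∀ i ∈ univ \ {i0}, (if i = i0 then 0 else (d i : ℝ) / (d i0 : ℝ)) * (v i j : ℝ)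
            = ((d i : ℝ) * (v i j : ℝ)) / (d i0 : ℝ) := by
          intro i hi
          rw [Finset.mem_sdiff, Finset.mem_singleton] at hi
          rw [if_neg hi.2]
          ring
        rw [Finset.sum_congr rfl this, ← Finset.sum_div]
        have heq : Finset.univ \ {i0} = Finset.univ.erase i0 := by
          ext i; simp [Finset.mem_erase, and_comm]
        rw [heq]
        have : ∑ i ∈ univ.erase i0, (d i : ℝ) * (v i j : ℝ) = -((d i0 : ℝ) * (v i0 j : ℝ)) := by
          linarith
        rw [this]
        field_simp⟩
    apply hv i0
    funext j
    have h3 := congrFun hy j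
    simp only [Pi.zero_apply] at h3 ⊢
    exact_mod_cast h3
  refine ⟨1, le_refl 1, x, hxne, d, fun i => by simpa using hdp i, ?_⟩
  funext j
  simp only [pow_one, Pi.smul_apply, smul_eq_mul, Finset.sum_apply]
  rw [hpx j]
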